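/- Let 𝒜 be a complex Banach algebra, let L₀, L₁, L₂, L₃ ∈ 𝒜 with ‖Lₖ‖ ≤ Λ for every k, let t ≥ 0, let N ≥ 1 be a natural number, and set τ = t/N. Define S₂(τ) = e^{(τ/2)L₀} e^{(τ/2)L₁} e^{(τ/2)L₂} e^{(τ/2)L₃} e^{(τ/2)L₃} e^{(τ/2)L₂} e^{(τ/2)L₁} e^{(τ/2)L₀}. Assume moreover that ‖exp(τ(L₀+L₁+L₂+L₃))‖ ≤ 1 and ‖S₂(τ)‖ ≤ 1 (as holds when these elements are quantum channels measured in the 1→1 superoperator norm). Then ‖exp(t(L₀+L₁+L₂+L₃)) − S₂(τ)^N‖ ≤ ((4tΛ)³/(3N²)) · e^{4tΛ/N}. In particular, for any ε ≥ ((4tΛ)³/(3N²)) · e^{4tΛ/N}, the error ‖exp(t(L₀+L₁+L₂+L₃)) − S₂(τ)^N‖ is at most ε. -/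

import Mathlib

open NormedSpace

/-- The second-order Suzuki–Lie–Trotter product formula
`S₂(τ) = e^{(τ/2)L₀} e^{(τ/2)L₁} e^{(τ/2)L₂} e^{(τ/2)L₃} e^{(τ/2)L₃} e^{(τ/2)L₂}
e^{(τ/2)L₁} e^{(τ/2)L₀}` for four generators in a complex Banach algebra. -/
noncomputable def trotterS2 {𝒜 : Type*} [NormedRing 𝒜] [NormedAlgebra ℂ 𝒜]
    (L₀ L₁ L₂ L₃ : 𝒜) (τ : ℝ) : 𝒜 :=
  exp (((τ / 2 : ℝ) : ℂ) • L₀) * exp (((τ / 2 : ℝ) : ℂ) • L₁) *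
    exp (((τ / 2 : ℝ) : ℂ) • L₂) * exp (((τ / 2 : ℝ) : ℂ) • L₃) *
    exp (((τ / 2 : ℝ) : ℂ) • L₃) * exp (((τ / 2 : ℝ) : ℂ) • L₂) *
    exp (((τ / 2 : ℝ) : ℂ) • L₁) * exp (((τ / 2 : ℝ) : ℂ) • L₀)

section TrotterAux

open Finset Nat

variable {𝒜 : Type*} [NormedRing 𝒜] [NormedAlgebra ℂ 𝒜] [CompleteSpace 𝒜]

/-- The `n`-th coefficient of the exponential series of `y`. -/
noncomputable def ecoef (y : 𝒜) (n : ℕ) : 𝒜 := ((n ! : ℂ))⁻¹ • y ^ n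

lemma ecoef_zero (y : 𝒜) : ecoef y 0 = 1 := by simp [ecoef]

lemma ecoef_one (y : 𝒜) : ecoef y 1 = y := by simp [ecoef]

lemma ecoef_two (y : 𝒜) : ecoef y 2 = (2 : ℂ)⁻¹ • y ^ 2 := by
  norm_num [ecoef, Nat.factorial]

lemma exp_eq_tsum_ecoef (y : 𝒜) : exp y = ∑' n, ecoef y n := by
  rw [exp_eq_tsum ℂ]
  rfl

lemma summable_norm_ecoef (y : 𝒜) : Summable fun n => ‖ecoef y n‖ := by
  simpa [ecoef] using norm_expSeries_summable' (𝕂 := ℂ) y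

lemma norm_ecoef_le {y : 𝒜} {β : ℝ} (hy : ‖y‖ ≤ β) {n : ℕ} (hn : 1 ≤ n) :
    ‖ecoef y n‖ ≤ β ^ n / n ! := by
  have hβ0 : (0:ℝ) ≤ β := le_trans (norm_nonneg y) hy
  have hfac : (0:ℝ) < (n ! : ℝ) := by exact_mod_cast Nat.factorial_pos n
  have hyn : ‖y ^ n‖ ≤ β ^ n :=
    (norm_pow_le' y hn).trans (pow_le_pow_left₀ (norm_nonneg y) hy n)
  rw [ecoef, norm_smul]
  have h1 : ‖((n ! : ℂ))⁻¹‖ = ((n ! : ℝ))⁻¹ := by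
    rw [norm_inv]
    norm_num
  rw [h1]
  calc ((n ! : ℝ))⁻¹ * ‖y ^ n‖ = ‖y ^ n‖ / n ! := by ring
    _ ≤ β ^ n / n ! := by gcongr

lemma sum_pow_div_factorial_mul (α β : ℝ) (n : ℕ) :
    ∑ i ∈ range (n + 1), α ^ i / i ! * (β ^ (n - i) / (n - i)!) = (α + β) ^ n / n ! := by
  rw [add_pow, sum_div]
  refine sum_congr rfl fun i hi => ?_
  have hin : i ≤ n := Nat.lt_succ_iff.mp (mem_range.mp hi)
  have hfac : ((n : ℕ)! : ℝ) = (n.choose i : ℝ) * i ! * (n - i)! := by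
    exact_mod_cast (Nat.choose_mul_factorial_mul_factorial hin).symm
  have h1 : (i ! : ℝ) ≠ 0 := by exact_mod_cast (Nat.factorial_pos i).ne'
  have h2 : (((n - i) : ℕ)! : ℝ) ≠ 0 := by exact_mod_cast (Nat.factorial_pos (n - i)).ne'
  have h3 : (n.choose i : ℝ) ≠ 0 := by exact_mod_cast (Nat.choose_pos hin).ne'
  rw [hfac]
  field_simp

/-- Coefficients of the product of exponentials of a list of elements. -/
noncomputable def pcoef : List 𝒜 → ℕ → 𝒜
  | [], n => if n = 0 then 1 else 0
  | y :: l, n => ∑ i ∈ range (n + 1), ecoef y i * pcoef l (n - i)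

lemma pcoef_nil (n : ℕ) : pcoef ([] : List 𝒜) n = if n = 0 then 1 else 0 := rfl

lemma pcoef_cons (y : 𝒜) (l : List 𝒜) (n : ℕ) :
    pcoef (y :: l) n = ∑ i ∈ range (n + 1), ecoef y i * pcoef l (n - i) := rfl

lemma pcoef_zero (l : List 𝒜) : pcoef l 0 = 1 := by
  induction l with
  | nil => rfl
  | cons y l ih => simp [pcoef_cons, ih, ecoef_zero]

lemma pcoef_one (l : List 𝒜) : pcoef l 1 = l.sum := by
  induction l with
  | nil => rfl
  | cons y l ih =>
      rw [pcoef_cons]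
      simp [Finset.sum_range_succ, ecoef_zero, ecoef_one, ih, pcoef_zero, List.sum_cons]
      abel

lemma pcoef_two_nil : pcoef ([] : List 𝒜) 2 = 0 := rfl

lemma pcoef_two_cons (y : 𝒜) (l : List 𝒜) :
    pcoef (y :: l) 2 = pcoef l 2 + y * l.sum + (2 : ℂ)⁻¹ • y ^ 2 := by
  rw [pcoef_cons]
  simp [Finset.sum_range_succ, ecoef_zero, ecoef_one, ecoef_two, pcoef_zero, pcoef_one]

lemma norm_pcoef_le (β : ℝ) (hβ : 0 ≤ β) :
    ∀ (l : List 𝒜), (∀ y ∈ l, ‖y‖ ≤ β) → ∀ n, 1 ≤ n →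
      ‖pcoef l n‖ ≤ ((l.length : ℝ) * β) ^ n / n ! := by
  intro l
  induction l with
  | nil =>
      intro _ n hn
      rw [pcoef_nil, if_neg (by omega)]
      simp only [List.length_nil, Nat.cast_zero, zero_mul, norm_zero]
      positivity
  | cons y l ih =>
      intro hl n hn
      have hy : ‖y‖ ≤ β := hl y List.mem_cons_self
      have hl' : ∀ z ∈ l, ‖z‖ ≤ β := fun z hz => hl z (List.mem_cons_of_mem y hz)
      have hfin : ∀ i ∈ range (n + 1),
          ‖ecoef y i * pcoef l (n - i)‖ ≤
            β ^ i / i ! * (((l.length : ℝ) * β) ^ (n - i) / (n - i)!) := by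
        intro i hi
        have hin : i ≤ n := Nat.lt_succ_iff.mp (mem_range.mp hi)
        by_cases h0 : i = 0
        · subst h0
          simp only [ecoef_zero, one_mul, pow_zero, Nat.factorial_zero, Nat.cast_one,
            div_one, Nat.sub_zero]
          have := ih hl' n hn
          linarith
        · by_cases hni : n - i = 0
          · rw [hni]
            simp only [pcoef_zero, mul_one, pow_zero, Nat.factorial_zero, Nat.cast_one,
              div_one]
            exact norm_ecoef_le hy (Nat.one_le_iff_ne_zero.mpr h0)
          · have h1 := norm_ecoef_le hy (Nat.one_le_iff_ne_zero.mpr h0)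
            have h2 := ih hl' (n - i) (Nat.one_le_iff_ne_zero.mpr hni)
            calc ‖ecoef y i * pcoef l (n - i)‖ ≤ ‖ecoef y i‖ * ‖pcoef l (n - i)‖ :=
                  norm_mul_le _ _
              _ ≤ β ^ i / i ! * (((l.length : ℝ) * β) ^ (n - i) / (n - i)!) := by
                  have hp1 : (0:ℝ) ≤ β ^ i / i ! := by positivity
                  exact mul_le_mul h1 h2 (norm_nonneg _) hp1
      calc ‖pcoef (y :: l) n‖ ≤ ∑ i ∈ range (n + 1), ‖ecoef y i * pcoef l (n - i)‖ := by
            rw [pcoef_cons]; exact norm_sum_le _ _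
        _ ≤ ∑ i ∈ range (n + 1), β ^ i / i ! * (((l.length : ℝ) * β) ^ (n - i) / (n - i)!) :=
            Finset.sum_le_sum hfin
        _ = (β + (l.length : ℝ) * β) ^ n / n ! := sum_pow_div_factorial_mul _ _ _
        _ = (((y :: l).length : ℝ) * β) ^ n / n ! := by
            rw [List.length_cons]
            push_cast
            ring_nf
  
lemma summable_norm_pcoef (l : List 𝒜) : Summable fun n => ‖pcoef l n‖ := by
  induction l with
  | nil =>
      apply summable_of_ne_finset_zero (s := ({0} : Finset ℕ))
      intro n hn
      simp only [Finset.mem_singleton] at hn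
      simp [pcoef_nil, hn]
  | cons y l ih =>
      simpa [pcoef_cons] using
        summable_norm_sum_mul_range_of_summable_norm (summable_norm_ecoef y) ih

lemma prod_exp_eq_tsum_pcoef (l : List 𝒜) : (l.map exp).prod = ∑' n, pcoef l n := by
  induction l with
  | nil =>
      simp only [List.map_nil, List.prod_nil, pcoef_nil]
      exact (tsum_ite_eq 0 (fun _ => (1 : 𝒜))).symm
  | cons y l ih =>
      rw [List.map_cons, List.prod_cons, ih, exp_eq_tsum_ecoef,
        tsum_mul_tsum_eq_tsum_sum_range_of_summable_norm (summable_norm_ecoef y)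
          (summable_norm_pcoef l)]
      rfl

lemma norm_tsum_sub_tsum_le (a b : ℕ → 𝒜) (x : ℝ) (hx : 0 ≤ x)
    (hsa : Summable fun n => ‖a n‖) (hsb : Summable fun n => ‖b n‖)
    (ha : ∀ n, 1 ≤ n → ‖a n‖ ≤ x ^ n / n !) (hb : ∀ n, 1 ≤ n → ‖b n‖ ≤ x ^ n / n !)
    (h0 : a 0 = b 0) (h1 : a 1 = b 1) (h2 : a 2 = b 2) :
    ‖(∑' n, a n) - ∑' n, b n‖ ≤ x ^ 3 / 3 * Real.exp x := by
  have hd : Summable fun n => ‖a n - b n‖ :=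
    (hsa.add hsb).of_nonneg_of_le (fun n => norm_nonneg _) fun n => norm_sub_le _ _
  rw [← Summable.tsum_sub hsa.of_norm hsb.of_norm]
  refine (norm_tsum_le_tsum_norm hd).trans ?_
  rw [← Summable.sum_add_tsum_nat_add 3 hd]
  have hz : ∑ i ∈ range 3, ‖a i - b i‖ = 0 := by
    simp [Finset.sum_range_succ, h0, h1, h2]
  rw [hz, zero_add]
  have hmaj : ∀ m : ℕ, ‖a (m + 3) - b (m + 3)‖ ≤ x ^ 3 / 3 * (x ^ m / m !) := by
    intro m
    have h6 : (6 : ℝ) * m ! ≤ ((m + 3)! : ℝ) := by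
      have hn : (6 : ℕ) * m ! ≤ (m + 3)! := by
        have h1' : (m + 3)! = (m + 3) * ((m + 2) * ((m + 1) * m !)) := by
          show (m + 3)! = _
          rw [show m + 3 = (m + 2) + 1 from rfl, Nat.factorial_succ,
            show m + 2 = (m + 1) + 1 from rfl, Nat.factorial_succ, Nat.factorial_succ]
        calc 6 * m ! = 3 * (2 * (1 * m !)) := by ring
          _ ≤ (m + 3) * ((m + 2) * ((m + 1) * m !)) := by
              gcongr <;> omega
          _ = (m + 3)! := h1'.symm
      exact_mod_cast hn
    have hround : ‖a (m + 3) - b (m + 3)‖ ≤ 2 * (x ^ (m + 3) / (m + 3)!) := by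
      have ha' := ha (m + 3) (by omega)
      have hb' := hb (m + 3) (by omega)
      have := norm_sub_le (a (m + 3)) (b (m + 3))
      linarith
    refine hround.trans ?_
    have hfp : (0:ℝ) < (m ! : ℝ) := by exact_mod_cast Nat.factorial_pos m
    have hfp3 : (0:ℝ) < ((m + 3)! : ℝ) := by exact_mod_cast Nat.factorial_pos (m + 3)
    have hx3 : x ^ (m + 3) = x ^ 3 * x ^ m := by ring
    rw [hx3]
    calc 2 * (x ^ 3 * x ^ m / (m + 3)!) ≤ 2 * (x ^ 3 * x ^ m / (6 * m !)) := by
          gcongr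
      _ = x ^ 3 / 3 * (x ^ m / m !) := by
          field_simp
          ring
  calc ∑' m, ‖a (m + 3) - b (m + 3)‖ ≤ ∑' m, x ^ 3 / 3 * (x ^ m / m !) :=
        Summable.tsum_le_tsum hmaj ((summable_nat_add_iff 3).mpr hd)
          ((Real.summable_pow_div_factorial x).mul_left _)
    _ = x ^ 3 / 3 * Real.exp x := by
        rw [tsum_mul_left, Real.exp_eq_exp_ℝ, exp_eq_tsum_div]

lemma norm_pow_sub_pow_le_of_norm_le_one (a b : 𝒜) (ha : ‖a‖ ≤ 1) (hb : ‖b‖ ≤ 1) :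
    ∀ n : ℕ, ‖a ^ n - b ^ n‖ ≤ n * ‖a - b‖ := by
  intro n
  induction n with
  | zero => simp
  | succ n ih =>
      have key : a ^ (n + 1) - b ^ (n + 1) = a ^ n * (a - b) + (a ^ n - b ^ n) * b := by
        rw [pow_succ a, pow_succ b]
        noncomm_ring
      rw [key]
      refine (norm_add_le _ _).trans ?_
      have h1 : ‖a ^ n * (a - b)‖ ≤ ‖a - b‖ := by
        cases n with
        | zero => simp
        | succ m =>
            refine (norm_mul_le _ _).trans ?_
            have hp : ‖a ^ (m + 1)‖ ≤ 1 :=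
              (norm_pow_le' a (Nat.succ_pos m)).trans (pow_le_one₀ (norm_nonneg a) ha)
            nlinarith [norm_nonneg (a - b)]
      have h2 : ‖(a ^ n - b ^ n) * b‖ ≤ n * ‖a - b‖ := by
        refine (norm_mul_le _ _).trans ?_
        nlinarith [norm_nonneg (a ^ n - b ^ n), norm_nonneg b, norm_nonneg (a - b)]
      push_cast
      linarith

end TrotterAux

/-- In a complex Banach algebra, with `‖Lₖ‖ ≤ Λ`, `t ≥ 0`, `N ≥ 1`,
`τ = t/N`, and assuming `‖exp(τ(L₀+L₁+L₂+L₃))‖ ≤ 1` and `‖S₂(τ)‖ ≤ 1`, we have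
`‖exp(t(L₀+L₁+L₂+L₃)) − S₂(τ)^N‖ ≤ ((4tΛ)³/(3N²))·e^{4tΛ/N}`; in particular the error
is at most any `ε` exceeding this bound. -/
theorem trotter_second_order_total_bound {𝒜 : Type*} [NormedRing 𝒜] [NormedAlgebra ℂ 𝒜]
    [CompleteSpace 𝒜] (L₀ L₁ L₂ L₃ : 𝒜) (Λ t : ℝ) (hΛ : 0 ≤ Λ)
    (h0 : ‖L₀‖ ≤ Λ) (h1 : ‖L₁‖ ≤ Λ) (h2 : ‖L₂‖ ≤ Λ) (h3 : ‖L₃‖ ≤ Λ)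
    (ht : 0 ≤ t) (N : ℕ) (hN : 1 ≤ N) (τ : ℝ) (hτ : τ = t / N)
    (hexp : ‖exp ((τ : ℂ) • (L₀ + L₁ + L₂ + L₃))‖ ≤ 1)
    (hS : ‖trotterS2 L₀ L₁ L₂ L₃ τ‖ ≤ 1) :
    ‖exp ((t : ℂ) • (L₀ + L₁ + L₂ + L₃)) - trotterS2 L₀ L₁ L₂ L₃ τ ^ N‖ ≤
        (4 * t * Λ) ^ 3 / (3 * N ^ 2) * Real.exp (4 * t * Λ / N) ∧
      ∀ ε : ℝ, (4 * t * Λ) ^ 3 / (3 * N ^ 2) * Real.exp (4 * t * Λ / N) ≤ ε →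
        ‖exp ((t : ℂ) • (L₀ + L₁ + L₂ + L₃)) - trotterS2 L₀ L₁ L₂ L₃ τ ^ N‖ ≤ ε := by
  have hNR : (0:ℝ) < (N : ℝ) := by exact_mod_cast Nat.lt_of_lt_of_le Nat.zero_lt_one hN
  have hτ0 : 0 ≤ τ := by rw [hτ]; positivity
  set L : 𝒜 := L₀ + L₁ + L₂ + L₃ with hL
  set s : ℂ := ((τ / 2 : ℝ) : ℂ) with hs
  set l : List 𝒜 := [s • L₀, s • L₁, s • L₂, s • L₃, s • L₃, s • L₂, s • L₁, s • L₀]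
    with hl
  have hSl : trotterS2 L₀ L₁ L₂ L₃ τ = (l.map exp).prod := by
    rw [hl]
    simp only [List.map_cons, List.map_nil, List.prod_cons, List.prod_nil, mul_one,
      trotterS2, hs, mul_assoc]
  set x : ℝ := 4 * τ * Λ with hx
  have hx0 : 0 ≤ x := by positivity
  set a : ℕ → 𝒜 := ecoef ((τ : ℂ) • L) with haf
  have hEa : exp ((τ : ℂ) • L) = ∑' n, a n := exp_eq_tsum_ecoef _
  have hSb : trotterS2 L₀ L₁ L₂ L₃ τ = ∑' n, pcoef l n :=
    hSl.trans (prod_exp_eq_tsum_pcoef l)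
  have hnormτL : ‖(τ : ℂ) • L‖ ≤ x := by
    rw [norm_smul]
    have hτn : ‖(τ : ℂ)‖ = τ := by
      rw [Complex.norm_real, Real.norm_eq_abs, abs_of_nonneg hτ0]
    have hLn : ‖L‖ ≤ 4 * Λ := by
      calc ‖L‖ ≤ ‖L₀‖ + ‖L₁‖ + ‖L₂‖ + ‖L₃‖ := by
            rw [hL]
            exact le_trans (norm_add_le _ _) (by
              have := norm_add_le (L₀ + L₁) L₂
              have := norm_add_le L₀ L₁
              linarith)
        _ ≤ 4 * Λ := by linarith
    rw [hτn, hx]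
    calc τ * ‖L‖ ≤ τ * (4 * Λ) := by
          exact mul_le_mul_of_nonneg_left hLn hτ0
      _ = 4 * τ * Λ := by ring
  have ha : ∀ n, 1 ≤ n → ‖a n‖ ≤ x ^ n / (Nat.factorial n) := fun n hn => norm_ecoef_le hnormτL hn
  have hsmul_bound : ∀ k : 𝒜, ‖k‖ ≤ Λ → ‖s • k‖ ≤ τ / 2 * Λ := by
    intro k hk
    rw [norm_smul, hs, Complex.norm_real, Real.norm_eq_abs,
      abs_of_nonneg (by linarith : (0:ℝ) ≤ τ / 2)]
    exact mul_le_mul_of_nonneg_left hk (by linarith)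
  have hmem : ∀ y ∈ l, ‖y‖ ≤ τ / 2 * Λ := by
    intro y hy
    rw [hl] at hy
    simp only [List.mem_cons, List.not_mem_nil, or_false] at hy
    rcases hy with rfl | rfl | rfl | rfl | rfl | rfl | rfl | rfl
    · exact hsmul_bound _ h0
    · exact hsmul_bound _ h1
    · exact hsmul_bound _ h2
    · exact hsmul_bound _ h3
    · exact hsmul_bound _ h3
    · exact hsmul_bound _ h2
    · exact hsmul_bound _ h1
    · exact hsmul_bound _ h0
  have hb : ∀ n, 1 ≤ n → ‖pcoef l n‖ ≤ x ^ n / (Nat.factorial n) := by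
    intro n hn
    have hlen : ((l.length : ℝ)) = 8 := by rw [hl]; norm_num
    have := norm_pcoef_le (τ / 2 * Λ) (by positivity) l hmem n hn
    rw [hlen] at this
    have heq : (8 : ℝ) * (τ / 2 * Λ) = x := by rw [hx]; ring
    rwa [heq] at this
  have hτs : (τ : ℂ) = 2 * s := by rw [hs]; push_cast; ring
  have hc0 : a 0 = pcoef l 0 := by
    rw [haf, ecoef_zero, pcoef_zero]
  have hc1 : a 1 = pcoef l 1 := by
    rw [haf, ecoef_one, pcoef_one, hl, hL, hτs]
    simp only [List.sum_cons, List.sum_nil, add_zero]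
    module
  have hc2 : a 2 = pcoef l 2 := by
    rw [haf, ecoef_two, hl, hL, hτs]
    simp only [pcoef_two_cons, pcoef_two_nil, List.sum_cons, List.sum_nil, add_zero,
      zero_add, mul_zero, smul_zero, pow_two, mul_add, add_mul, smul_add, smul_mul_assoc,
      mul_smul_comm, smul_smul]
    module
  have hstep : ‖exp ((τ : ℂ) • L) - trotterS2 L₀ L₁ L₂ L₃ τ‖ ≤
      x ^ 3 / 3 * Real.exp x := by
    rw [hEa, hSb]
    exact norm_tsum_sub_tsum_le a (pcoef l) x hx0 (by rw [haf]; exact summable_norm_ecoef _)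
      (summable_norm_pcoef l) ha hb hc0 hc1 hc2
  have hpow : exp ((t : ℂ) • L) = exp ((τ : ℂ) • L) ^ N := by
    have hts : ((t : ℝ) : ℂ) • L = N • ((τ : ℂ) • L) := by
      rw [← Nat.cast_smul_eq_nsmul ℂ, smul_smul]
      congr 1
      push_cast
      rw [hτ]
      push_cast
      have hNC : (N : ℂ) ≠ 0 := Nat.cast_ne_zero.mpr (by omega)
      field_simp
    letI : NormedAlgebra ℚ 𝒜 := NormedAlgebra.restrictScalars ℚ ℂ 𝒜
    rw [hts, exp_nsmul]
  have htel := norm_pow_sub_pow_le_of_norm_le_one _ _ hexp hS N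
  have hmain : ‖exp ((t : ℂ) • L) - trotterS2 L₀ L₁ L₂ L₃ τ ^ N‖ ≤
      (N : ℝ) * (x ^ 3 / 3 * Real.exp x) := by
    rw [hpow]
    refine htel.trans ?_
    exact mul_le_mul_of_nonneg_left hstep (by positivity)
  have harith : (N : ℝ) * (x ^ 3 / 3 * Real.exp x) =
      (4 * t * Λ) ^ 3 / (3 * (N : ℝ) ^ 2) * Real.exp (4 * t * Λ / N) := by
    have hx' : x = 4 * t * Λ / N := by
      rw [hx, hτ]
      ring
    rw [hx']
    field_simp
  rw [harith] at hmain
  exact ⟨hmain, fun ε hε => hmain.trans hε⟩
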